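/- (Hard direction of the characterization) Let G be a graph on {1,...,n} such that for all i < j with {i,j} ∈ E(G), the induced subgraph of G on {i,...,j} is a clique. Then for any two independent sets F₁, F₂ of G, both components of sort(F₁, F₂) are again independent sets of G. -/

import Mathlib

/-- The first component of the sorting `sort(F,G)`: the elements at odd
positions (1-indexed) of the weakly increasing list of the multiset union of `F` and `G`. -/
def sortFst (F G : Finset ℕ) : Finset ℕ :=
  ((((F.val + G.val).sort (· ≤ ·)).zipIdx.filter (fun p => p.2 % 2 = 0)).map Prod.fst).toFinset

/-- The second component of the sorting `sort(F,G)`: the elements at even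
positions (1-indexed). -/
def sortSnd (F G : Finset ℕ) : Finset ℕ :=
  ((((F.val + G.val).sort (· ≤ ·)).zipIdx.filter (fun p => p.2 % 2 = 1)).map Prod.fst).toFinset

def IsIndep (G : SimpleGraph ℕ) (F : Finset ℕ) : Prop :=
  ∀ a ∈ F, ∀ b ∈ F, ¬ G.Adj a b

lemma aux_indep (G : SimpleGraph ℕ)
    (h : ∀ i j, i < j → G.Adj i j →
        ∀ k l, i ≤ k → k ≤ j → i ≤ l → l ≤ j → k ≠ l → G.Adj k l)
    (F₁ F₂ : Finset ℕ) (hF₁ : IsIndep G F₁) (hF₂ : IsIndep G F₂) (r : ℕ) :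
    IsIndep G ((((F₁.val + F₂.val).sort (· ≤ ·)).zipIdx.filter
      (fun p => p.2 % 2 = r)).map Prod.fst).toFinset := by
  classical
  set L := (F₁.val + F₂.val).sort (· ≤ ·) with hLdef
  have hsorted : L.Pairwise (· ≤ ·) := Multiset.pairwise_sort _ _
  have hmono : ∀ i j : ℕ, (hi : i < L.length) → (hj : j < L.length) → i ≤ j →
      L[i] ≤ L[j] := by
    intro i j hi hj hij
    have := hsorted.rel_get_of_le (a := ⟨i, hi⟩) (b := ⟨j, hj⟩) hij
    simpa using this
  -- main claim: impossible to have a < b adjacent at positions k, m with k+2 ≤ m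
  have main : ∀ a b : ℕ, a < b → G.Adj a b →
      ∀ k m : ℕ, (hkm : k + 2 ≤ m) → (hm : m < L.length) →
      L[k]'(by omega) = a → L[m] = b → False := by
    intro a b hab hadj k m hkm hm hka hmb
    have hclique : ∀ x y, a ≤ x → x ≤ b → a ≤ y → y ≤ b → x ≠ y → G.Adj x y :=
      h a b hab hadj
    set q : ℕ → Bool := fun x => decide (a ≤ x ∧ x ≤ b) with hq
    -- upper bound on count in each independent set
    have hub : ∀ F : Finset ℕ, IsIndep G F →
        Multiset.countP (fun x => q x = true) F.val ≤ 1 := by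
      intro F hF
      have hc : (F.filter (fun x => q x = true)).card ≤ 1 := by
        rw [Finset.card_le_one]
        intro x hx y hy
        simp only [Finset.mem_filter, hq, decide_eq_true_eq] at hx hy
        by_contra hne
        exact hF x hx.1 y hy.1 (hclique x y hx.2.1 hx.2.2 hy.2.1 hy.2.2 hne)
      rw [Multiset.countP_eq_card_filter]
      simpa [Finset.card, Finset.filter_val] using hc
    have hub2 : Multiset.countP (fun x => q x = true) (F₁.val + F₂.val) ≤ 2 := by
      rw [Multiset.countP_add]
      have := hub F₁ hF₁
      have := hub F₂ hF₂
      omega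
    -- lower bound: at least 3 elements of L lie in [a, b]
    have hsub : ((L.drop k).take (m + 1 - k)).Sublist L :=
      ((List.take_prefix _ _).sublist).trans (List.drop_sublist _ _)
    have hlen : ((L.drop k).take (m + 1 - k)).length = m + 1 - k := by
      simp only [List.length_take, List.length_drop]
      omega
    have hall : ∀ x ∈ (L.drop k).take (m + 1 - k), q x = true := by
      intro x hx
      obtain ⟨i, hi, rfl⟩ := List.mem_iff_getElem.mp hx
      rw [hlen] at hi
      have hdl : k + i < L.length := by omega
      have hxval : ((L.drop k).take (m + 1 - k))[i] = L[k + i] := by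
        rw [List.getElem_take, List.getElem_drop]
      rw [hxval]
      simp only [hq, decide_eq_true_eq]
      constructor
      · rw [← hka]; exact hmono k (k + i) (by omega) hdl (by omega)
      · rw [← hmb]; exact hmono (k + i) m hdl hm (by omega)
    have hlb : 3 ≤ L.countP q := by
      have h1 : ((L.drop k).take (m + 1 - k)).countP q = m + 1 - k :=
        by rw [List.countP_eq_length.mpr hall, hlen]
      have h2 := hsub.countP_le (p := q)
      omega
    have heq : Multiset.countP (fun x => q x = true) (F₁.val + F₂.val) = L.countP q := by
      have : (L : Multiset ℕ) = F₁.val + F₂.val := Multiset.sort_eq _ _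
      rw [← this]
      simp [Multiset.coe_countP]
    omega
  -- now the independence
  intro a ha b hb hadj
  simp only [List.mem_toFinset, List.mem_map, List.mem_filter, Prod.exists,
    decide_eq_true_eq] at ha hb
  obtain ⟨x, i, ⟨hmemi, hpari⟩, hxa⟩ := ha
  obtain ⟨y, j, ⟨hmemj, hparj⟩, hyb⟩ := hb
  rw [List.mk_mem_zipIdx_iff_getElem?] at hmemi hmemj
  obtain ⟨hi, hia⟩ := List.getElem?_eq_some_iff.mp hmemi
  obtain ⟨hj, hjb⟩ := List.getElem?_eq_some_iff.mp hmemj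
  rw [hxa] at hia
  rw [hyb] at hjb
  rcases lt_trichotomy a b with hab | hab | hab
  · have hij : i < j := by
      by_contra hle
      push_neg at hle
      have := hmono j i hj hi hle
      rw [hia, hjb] at this
      omega
    exact main a b hab hadj i j (by omega) hj hia hjb
  · exact hadj.ne hab
  · have hij : j < i := by
      by_contra hle
      push_neg at hle
      have := hmono i j hi hj hle
      rw [hia, hjb] at this
      omega
    exact main b a hab hadj.symm j i (by omega) hi hjb hia

theorem stmt_13 (n : ℕ) (G : SimpleGraph ℕ)
    (hsupp : ∀ a b, G.Adj a b → a ∈ Finset.Icc 1 n ∧ b ∈ Finset.Icc 1 n)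
    (h : ∀ i j, i < j → G.Adj i j →
        ∀ k l, i ≤ k → k ≤ j → i ≤ l → l ≤ j → k ≠ l → G.Adj k l)
    (F₁ F₂ : Finset ℕ) (hF₁V : F₁ ⊆ Finset.Icc 1 n) (hF₂V : F₂ ⊆ Finset.Icc 1 n)
    (hF₁ : IsIndep G F₁) (hF₂ : IsIndep G F₂) :
    IsIndep G (sortFst F₁ F₂) ∧ IsIndep G (sortSnd F₁ F₂) :=
  ⟨aux_indep G h F₁ F₂ hF₁ hF₂ 0, aux_indep G h F₁ F₂ hF₁ hF₂ 1⟩
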